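/- Any overring of a Dedekind domain is a Dedekind domain. That is, if R is a Dedekind domain with fraction field K and S is a ring with R ⊆ S ⊆ K, then S is a Dedekind domain. -/

import Mathlib

open FractionalIdeal
open scoped nonZeroDivisors

lemma overring_key {R : Type*} [CommRing R] [IsDomain R] [IsDedekindDomain R]
    {K : Type*} [Field K] [Algebra R K] [IsFractionRing R K] (x : K) :
    ∃ n n' : R, (∃ a : R, algebraMap R K a = algebraMap R K n * x) ∧
      (∃ b : R, algebraMap R K b = algebraMap R K n' * x) ∧
      algebraMap R K n + algebraMap R K n' * x = 1 := by
  rcases eq_or_ne x 0 with rfl | hx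
  · exact ⟨1, 0, ⟨0, by simp⟩, ⟨0, by simp⟩, by simp⟩
  set I : FractionalIdeal R⁰ K := spanSingleton R⁰ x with hIdef
  have hI : I ≠ 0 := spanSingleton_ne_zero_iff.mpr hx
  set N : FractionalIdeal R⁰ K := I⁻¹ ⊓ 1 with hNdef
  have memI : ∀ z : K, z ∈ I ↔ ∃ r : R, r • x = z := fun z => mem_spanSingleton R⁰
  have memN : ∀ y : K, y ∈ N ↔ y * x ∈ (1 : FractionalIdeal R⁰ K) ∧
      y ∈ (1 : FractionalIdeal R⁰ K) := by
    intro y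
    have hinf : y ∈ N ↔ y ∈ I⁻¹ ∧ y ∈ (1 : FractionalIdeal R⁰ K) := by
      rw [hNdef, ← FractionalIdeal.mem_coe, coe_inf, Submodule.mem_inf,
        FractionalIdeal.mem_coe, FractionalIdeal.mem_coe]
    rw [hinf, mem_inv_iff hI]
    constructor
    · rintro ⟨h1, h2⟩
      exact ⟨h1 x ((memI x).mpr ⟨1, one_smul _ _⟩), h2⟩
    · rintro ⟨h1, h2⟩
      refine ⟨?_, h2⟩
      rintro z hz
      obtain ⟨r, rfl⟩ := (memI z).mp hz
      rw [mul_smul_comm]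
      exact Submodule.smul_mem _ r h1
  -- N is nonzero
  obtain ⟨d, a, ha⟩ := IsLocalization.exists_integer_multiple R⁰ x
  have hd0 : (algebraMap R K) (d : R) ≠ 0 := by
    simpa using IsFractionRing.to_map_ne_zero_of_mem_nonZeroDivisors d.2
  have hdN : (algebraMap R K) (d : R) ∈ N := by
    rw [memN]
    exact ⟨mem_one_iff R⁰ |>.mpr ⟨a, by rw [ha, Algebra.smul_def]⟩,
      mem_one_iff R⁰ |>.mpr ⟨d, rfl⟩⟩
  have hN : N ≠ 0 := by
    intro h
    rw [h] at hdN
    exact hd0 (by simpa using hdN)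
  have hNI : N * I ≤ 1 := by
    rw [mul_le]
    intro y hy z hz
    obtain ⟨r, rfl⟩ := (memI z).mp hz
    rw [mul_smul_comm]
    exact Submodule.smul_mem _ r ((memN y).mp hy).1
  have hJle : N + N * I ≤ 1 := sup_le (le_trans inf_le_right le_rfl) hNI
  obtain ⟨J₀, hJ₀⟩ := le_one_iff_exists_coeIdeal.mp hJle
  have hJtop : J₀ = ⊤ := by
    by_contra htop
    obtain ⟨p, hpmax, hple⟩ := Ideal.exists_le_maximal J₀ htop
    set P : FractionalIdeal R⁰ K := (p : FractionalIdeal R⁰ K) with hPdef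
    have hNleP : N ≤ P := by
      calc N ≤ N + N * I := le_sup_left
        _ = ↑J₀ := hJ₀.symm
        _ ≤ P := coeIdeal_le_coeIdeal K |>.mpr hple
    have hNIleP : N * I ≤ P := by
      calc N * I ≤ N + N * I := le_sup_right
        _ = ↑J₀ := hJ₀.symm
        _ ≤ P := coeIdeal_le_coeIdeal K |>.mpr hple
    have hP0 : P ≠ 0 := fun h => hN (le_antisymm (h ▸ hNleP) (zero_le N))
    have hPinv : P * P⁻¹ = 1 := mul_inv_cancel₀ hP0
    have hNinv : N * N⁻¹ = 1 := mul_inv_cancel₀ hN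
    have key : P⁻¹ * N ≤ N := by
      have h1 : P⁻¹ * N ≤ 1 := by
        calc P⁻¹ * N ≤ P⁻¹ * P := mul_right_mono hNleP
          _ = 1 := by rw [mul_comm]; exact hPinv
      have h2 : P⁻¹ * N ≤ I⁻¹ := by
        rw [inv_eq (I := I), le_div_iff_of_ne_zero hI]
        intro y hy z hz
        have : y * z ∈ P⁻¹ * N * I := mul_mem_mul hy hz
        have hle : P⁻¹ * N * I ≤ 1 := by
          calc P⁻¹ * N * I = P⁻¹ * (N * I) := mul_assoc _ _ _
            _ ≤ P⁻¹ * P := mul_right_mono hNIleP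
            _ = 1 := by rw [mul_comm]; exact hPinv
        exact hle this
      exact le_inf h2 h1
    have hPle1 : P⁻¹ ≤ 1 := by
      calc P⁻¹ = P⁻¹ * N * N⁻¹ := by rw [mul_assoc, hNinv, mul_one]
        _ ≤ N * N⁻¹ := mul_left_mono key
        _ = 1 := hNinv
    have h1P : (1 : FractionalIdeal R⁰ K) ≤ P := by
      calc (1 : FractionalIdeal R⁰ K) = P * P⁻¹ := hPinv.symm
        _ ≤ P * 1 := mul_right_mono hPle1
        _ = P := mul_one P
    have : (1 : K) ∈ P := h1P (FractionalIdeal.one_mem_one _)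
    obtain ⟨c, hc, hc1⟩ := (mem_coeIdeal _).mp this
    have : c = 1 := IsFractionRing.injective R K (by rw [hc1, _root_.map_one])
    exact hpmax.ne_top (Ideal.eq_top_of_isUnit_mem p hc (this ▸ isUnit_one))
  have hone : (1 : K) ∈ N + N * I := by
    rw [← hJ₀, hJtop]
    exact (mem_coeIdeal _).mpr ⟨1, trivial, map_one _⟩
  rw [← FractionalIdeal.mem_coe, coe_add, Submodule.add_eq_sup, Submodule.mem_sup] at hone
  obtain ⟨y, hy, z, hz, hyz⟩ := hone
  rw [FractionalIdeal.mem_coe] at hy hz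
  rw [mul_comm] at hz
  obtain ⟨w, hw, rfl⟩ := mem_singleton_mul.mp hz
  obtain ⟨hyx, hy1⟩ := (memN y).mp hy
  obtain ⟨hwx, hw1⟩ := (memN w).mp hw
  obtain ⟨n, hn⟩ := (mem_one_iff R⁰).mp hy1
  obtain ⟨n', hn'⟩ := (mem_one_iff R⁰).mp hw1
  obtain ⟨a1, ha1⟩ := (mem_one_iff R⁰).mp hyx
  obtain ⟨b1, hb1⟩ := (mem_one_iff R⁰).mp hwx
  refine ⟨n, n', ⟨a1, ?_⟩, ⟨b1, ?_⟩, ?_⟩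
  · rw [ha1, hn]
  · rw [hb1, hn']
  · rw [hn, hn', ← hyz, mul_comm x w]

set_option maxHeartbeats 1000000 in
/-- Any overring of a Dedekind domain is a Dedekind domain: if `R` is a Dedekind domain
with fraction field `K` and `S` is an intermediate ring `R ⊆ S ⊆ K`, then `S` is a
Dedekind domain.  (Mathlib's `IsDedekindDomain` allows the field case `S = K`.) -/
theorem overring_isDedekindDomain (R : Type*) [CommRing R] [IsDomain R]
    [IsDedekindDomain R] (K : Type*) [Field K] [Algebra R K] [IsFractionRing R K]
    (S : Subalgebra R K) : IsDedekindDomain S := by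
  have hRK : Function.Injective (algebraMap R K) := IsFractionRing.injective R K
  have hcoe : ∀ r : R, ((algebraMap R S r : S) : K) = algebraMap R K r := fun r => rfl
  -- the key lemma, phrased inside `S`
  have key : ∀ x : S, ∃ n n' a b : R,
      algebraMap R S n * x = algebraMap R S a ∧
      algebraMap R S n' * x = algebraMap R S b ∧
      algebraMap R S n + algebraMap R S n' * x = 1 := by
    intro x
    obtain ⟨n, n', ⟨a, ha⟩, ⟨b, hb⟩, hsum⟩ := overring_key (R := R) (K := K) (x : K)
    refine ⟨n, n', a, b, ?_, ?_, ?_⟩ <;> apply Subtype.ext <;> push_cast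
    · exact ha.symm
    · exact hb.symm
    · exact hsum
  -- ideals of `S` are determined by their contraction to `R`
  have hcontr : ∀ I J : Ideal S, I ≤ J →
      Ideal.comap (algebraMap R S) I = Ideal.comap (algebraMap R S) J → I = J := by
    intro I J hIJ hcom
    refine le_antisymm hIJ fun x hxJ => ?_
    obtain ⟨n, n', a, b, han, hbn, hsum⟩ := key x
    have haJ : a ∈ Ideal.comap (algebraMap R S) J := by
      simp only [Ideal.mem_comap]
      exact han ▸ Ideal.mul_mem_left J _ hxJ
    have hbJ : b ∈ Ideal.comap (algebraMap R S) J := by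
      simp only [Ideal.mem_comap]
      exact hbn ▸ Ideal.mul_mem_left J _ hxJ
    rw [← hcom] at haJ hbJ
    have hx : x = algebraMap R S n * x + algebraMap R S b * x := by
      rw [← hbn, mul_assoc, mul_comm x, ← mul_assoc, ← add_mul, hsum, one_mul]
    rw [hx]
    exact Ideal.add_mem I (han ▸ haJ) (Ideal.mul_mem_right x I hbJ)
  -- `S` is Noetherian
  have hNoeth : IsNoetherianRing S := by
    rw [isNoetherianRing_iff, _root_.isNoetherian_iff]
    have hwfR : WellFounded ((· > ·) : Ideal R → Ideal R → Prop) :=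
      _root_.isNoetherian_iff.mp (inferInstance : IsNoetherian R R)
    refine Subrelation.wf (r := fun I J : Ideal S =>
        Ideal.comap (algebraMap R S) J < Ideal.comap (algebraMap R S) I) ?_
      (InvImage.wf _ hwfR)
    intro I J h
    exact lt_of_le_of_ne (Ideal.comap_mono h.le)
      fun e => h.ne' (hcontr J I h.le e).symm
  -- contractions of nonzero primes are nonzero primes
  have hcomap_ne_bot : ∀ Q : Ideal S, Q ≠ ⊥ → Q.IsPrime →
      Ideal.comap (algebraMap R S) Q ≠ ⊥ := by
    intro Q hQ hQp
    obtain ⟨x, hxQ, hx0⟩ := Submodule.exists_mem_ne_zero_of_ne_bot hQ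
    obtain ⟨n, n', a, b, han, hbn, hsum⟩ := key x
    have haQ : a ∈ Ideal.comap (algebraMap R S) Q := by
      simp only [Ideal.mem_comap]
      exact han ▸ Ideal.mul_mem_left Q _ hxQ
    have hbQ : b ∈ Ideal.comap (algebraMap R S) Q := by
      simp only [Ideal.mem_comap]
      exact hbn ▸ Ideal.mul_mem_left Q _ hxQ
    have hRS : Function.Injective (algebraMap R S) := by
      intro r r' h
      apply hRK
      rw [← hcoe r, ← hcoe r', h]
    by_cases ha0 : a = 0
    · exfalso
      subst ha0
      rw [_root_.map_zero] at han
      have hn : algebraMap R S n = 0 := by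
        rcases mul_eq_zero.mp han with h | h
        · exact h
        · exact absurd h hx0
      rw [hn, zero_add] at hsum
      have hb1 : algebraMap R S b = 1 := by rw [← hbn, hsum]
      have h1Q : (1 : S) ∈ Q := hb1 ▸ Ideal.mem_comap.mp hbQ
      exact hQp.ne_top (Ideal.eq_top_of_isUnit_mem _ h1Q isUnit_one)
    · intro hbot
      rw [hbot] at haQ
      exact ha0 haQ
  -- `S` has Krull dimension at most one
  have hdim : Ring.DimensionLEOne S := by
    constructor
    intro Q hQ hQp
    have hp : (Ideal.comap (algebraMap R S) Q).IsPrime := Ideal.IsPrime.comap _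
    have hpmax : (Ideal.comap (algebraMap R S) Q).IsMaximal :=
      Ring.DimensionLEOne.maximalOfPrime (hcomap_ne_bot Q hQ hQp) hp
    constructor
    constructor
    · exact hQp.ne_top
    · intro J hQJ
      have hle : Ideal.comap (algebraMap R S) Q ≤ Ideal.comap (algebraMap R S) J :=
        Ideal.comap_mono hQJ.le
      have hne : Ideal.comap (algebraMap R S) Q ≠ Ideal.comap (algebraMap R S) J :=
        fun e => hQJ.ne (hcontr Q J hQJ.le e)
      have : Ideal.comap (algebraMap R S) J = ⊤ :=
        hpmax.out.2 _ (lt_of_le_of_ne hle hne)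
      have h1 : (1 : S) ∈ J := by
        have : (1 : R) ∈ Ideal.comap (algebraMap R S) J := this ▸ trivial
        simpa using this
      exact Ideal.eq_top_of_isUnit_mem _ h1 isUnit_one
  -- `K` is a fraction field of `S`
  have hSK : ∀ x : S, algebraMap S K x = (x : K) := fun x => rfl
  have hSKinj : Function.Injective (algebraMap S K) := fun x y h =>
    Subtype.ext (by rwa [hSK, hSK] at h)
  haveI : IsFractionRing S K := by
    refine ⟨⟨?_, ?_, ?_⟩⟩
    · rintro ⟨y, hy⟩
      have hy0 : (y : K) ≠ 0 := fun h =>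
        nonZeroDivisors.ne_zero hy (Subtype.ext (by simpa using h))
      exact isUnit_iff_ne_zero.mpr (by rwa [hSK])
    · intro z
      obtain ⟨⟨r, d⟩, h⟩ := IsLocalization.surj (M := R⁰) (S := K) z
      have hd0 : algebraMap R S (d : R) ∈ nonZeroDivisors S := by
        refine mem_nonZeroDivisors_of_ne_zero fun h0 => ?_
        have : algebraMap R K (d : R) = 0 := by rw [← hcoe, h0]; rfl
        exact nonZeroDivisors.ne_zero d.2 (hRK (by rw [this, _root_.map_zero]))
      refine ⟨⟨algebraMap R S r, ⟨algebraMap R S (d : R), hd0⟩⟩, ?_⟩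
      simpa [hSK, hcoe] using h
    · intro a b h
      exact ⟨1, by rw [hSKinj h]⟩
  rw [isDedekindDomain_iff _ K]
  refine ⟨inferInstance, hNoeth, hdim, ?_⟩
  intro x hx
  -- the ideal of denominators of `x` in `S`
  let D : Ideal S :=
    { carrier := {s : S | (s : K) * x ∈ S}
      add_mem' := fun {a b} ha hb => by
        simpa [add_mul] using add_mem ha hb
      zero_mem' := by simp [Subalgebra.zero_mem]
      smul_mem' := fun c s hs => by
        have : ((c * s : S) : K) * x = (c : K) * ((s : K) * x) := by push_cast; ring
        simpa [smul_eq_mul, mul_assoc, this] using mul_mem c.2 hs }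
  have hD : D = ⊤ := by
    by_contra hD
    obtain ⟨Q, hQmax, hDQ⟩ := Ideal.exists_le_maximal D hD
    haveI hQp : Q.IsPrime := hQmax.isPrime
    set p : Ideal R := Ideal.comap (algebraMap R S) Q with hpdef
    haveI hp : p.IsPrime := Ideal.IsPrime.comap _
    set Rp : Subalgebra R K :=
      Localization.subalgebra K p.primeCompl p.primeCompl_le_nonZeroDivisors with hRpdef
    haveI : IsLocalization.AtPrime Rp p :=
      Localization.subalgebra.isLocalization_subalgebra K p.primeCompl _
    have memRp : ∀ c u : R, u ∉ p → algebraMap R K c / algebraMap R K u ∈ Rp := by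
      intro c u hu
      refine ⟨c, u, hu, ?_⟩
      rw [IsFractionRing.mk'_eq_div]
    have memRp' : ∀ y : K, y ∈ Rp → ∃ c u : R, u ∉ p ∧ y = algebraMap R K c / algebraMap R K u := by
      rintro y ⟨c, u, hu, hy⟩
      exact ⟨c, u, hu, by rw [hy, IsFractionRing.mk'_eq_div]⟩
    -- `S` is contained in `Rp`
    have hSRp : ∀ s : S, (s : K) ∈ Rp := by
      intro s
      obtain ⟨n, n', ⟨a, ha⟩, ⟨b, hb⟩, hsum⟩ := overring_key (R := R) (K := K) (s : K)
      have himp : n ∈ p → n' ∉ p := by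
        intro hn hn'
        have h1 : (1 : S) ∈ Q := by
          have hmem : algebraMap R S n + algebraMap R S n' * s ∈ Q :=
            Ideal.add_mem _ (Ideal.mem_comap.mp hn)
              (Ideal.mul_mem_right _ _ (Ideal.mem_comap.mp hn'))
          have he : algebraMap R S n + algebraMap R S n' * s = 1 := by
            apply Subtype.ext
            push_cast
            exact hsum
          rwa [he] at hmem
        exact hQmax.ne_top (Ideal.eq_top_of_isUnit_mem _ h1 isUnit_one)
      by_cases hn : n ∈ p
      · have hn' : n' ∉ p := himp hn
        have hn'0 : algebraMap R K n' ≠ 0 := by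
          intro h0
          apply hn'
          have : n' = 0 := hRK (by rw [h0, _root_.map_zero])
          rw [this]
          exact p.zero_mem
        have hs : (s : K) = algebraMap R K b / algebraMap R K n' := by
          rw [hb]
          field_simp
        rw [hs]
        exact memRp b n' hn'
      · have hn0 : algebraMap R K n ≠ 0 := by
          intro h0
          apply hn
          have : n = 0 := hRK (by rw [h0, _root_.map_zero])
          rw [this]
          exact p.zero_mem
        have hs : (s : K) = algebraMap R K a / algebraMap R K n := by
          rw [ha]
          field_simp
        rw [hs]
        exact memRp a n hn
    have hle : S ≤ Rp := fun s hs => hSRp ⟨s, hs⟩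
    letI : Algebra S Rp := (Subalgebra.inclusion hle).toRingHom.toAlgebra
    haveI : IsScalarTower S Rp K :=
      IsScalarTower.of_algebraMap_eq fun s => rfl
    haveI : IsDedekindDomain Rp :=
      IsLocalization.isDedekindDomain R p.primeCompl_le_nonZeroDivisors Rp
    haveI : IsFractionRing Rp K :=
      Localization.subalgebra.isFractionRing K p.primeCompl _
    have hxRp : IsIntegral Rp x := IsIntegral.tower_top hx
    obtain ⟨y, hy⟩ := IsIntegrallyClosed.isIntegral_iff.mp hxRp
    have hxmem : x ∈ Rp := by
      rw [← hy]
      exact y.2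
    obtain ⟨c, u, hu, hxcu⟩ := memRp' x hxmem
    have hu0 : algebraMap R K u ≠ 0 := by
      intro h0
      apply hu
      have : u = 0 := hRK (by rw [h0, _root_.map_zero])
      rw [this]
      exact p.zero_mem
    have huD : algebraMap R S u ∈ D := by
      show ((algebraMap R S u : S) : K) * x ∈ S
      rw [hcoe, hxcu, mul_div_cancel₀ _ hu0]
      exact (algebraMap R S c).2
    exact hu (Ideal.mem_comap.mpr (hDQ huD))
  have h1D : (1 : S) ∈ D := hD ▸ trivial
  have hxS : x ∈ S := by
    have h : ((1 : S) : K) * x ∈ S := h1D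
    simpa using h
  exact ⟨⟨x, hxS⟩, rfl⟩
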